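/- With γ⁽ᵏ⁾ ∈ 𝔽₂[x] defined by γ⁽⁰⁾ = 0, γ⁽¹⁾ = 1, γ⁽ᵏ⁾ = x·γ⁽ᵏ⁻¹⁾ + γ⁽ᵏ⁻²⁾, we have γ^(2^k − 1) = ∑_{j=1}^{k} x^(2^k − 2^j) for all k ≥ 1 (and γ^(2^0 − 1) = γ⁽⁰⁾ = 0). -/
import Mathlib


open Polynomial

noncomputable def gam : ℕ → Polynomial (ZMod 2)
  | 0 => 0
  | 1 => 1
  | (k + 2) => Polynomial.X * gam (k + 1) + gam k

lemma gam_add (m n : ℕ) :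
    gam (m + n + 1) = gam (m + 1) * gam (n + 1) + gam m * gam n := by
  induction n using Nat.twoStepInduction with
  | zero => simp [gam]
  | one =>
    rw [show m + 1 + 1 = m + 2 from rfl]
    simp only [gam]
    ring
  | more n ih1 ih2 =>
    have h3 : m + (n + 2) + 1 = (m + n + 1) + 2 := by omega
    rw [h3, show gam ((m + n + 1) + 2) = Polynomial.X * gam (m + n + 1 + 1)
          + gam (m + n + 1) from rfl]
    have h4 : m + n + 1 + 1 = m + (n + 1) + 1 := by omega
    rw [h4, ih2, ih1]
    rw [show n + 2 + 1 = (n + 1) + 2 from rfl, show n + 1 + 1 = n + 2 from rfl]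
    simp only [gam]
    ring

lemma two_mul_gam (a : Polynomial (ZMod 2)) : a + a = 0 :=
  CharTwo.add_self_eq_zero a

lemma gam_double (n : ℕ) : gam (2 * (n + 1)) = Polynomial.X * gam (n + 1) ^ 2 := by
  have h : 2 * (n + 1) = (n + 1) + n + 1 := by omega
  rw [h, gam_add]
  rw [show gam (n + 1 + 1) = Polynomial.X * gam (n + 1) + gam n from rfl]
  have h2 : gam n * gam (n + 1) + gam n * gam (n + 1) = 0 := two_mul_gam _
  linear_combination h2

lemma gam_odd (n : ℕ) : gam (2 * n + 1) = gam (n + 1) ^ 2 + gam n ^ 2 := by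
  have h : 2 * n + 1 = n + n + 1 := by omega
  rw [h, gam_add]
  ring

lemma gam_two_pow (k : ℕ) : gam (2 ^ k) = Polynomial.X ^ (2 ^ k - 1) := by
  induction k with
  | zero => simp [gam]
  | succ k ih =>
    have h1 : 1 ≤ 2 ^ k := Nat.one_le_two_pow
    have h3 : 2 ^ (k + 1) = 2 * 2 ^ k := by ring
    have h2 : 2 ^ (k + 1) = 2 * ((2 ^ k - 1) + 1) := by omega
    rw [h2, gam_double, show 2^k - 1 + 1 = 2^k by omega, ih, ← pow_mul, ← pow_succ']
    congr 1
    omega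

theorem gam_two_pow_sub_one (k : ℕ) (hk : 1 ≤ k) :
    gam (2 ^ k - 1) = ∑ j ∈ Finset.Icc 1 k, Polynomial.X ^ (2 ^ k - 2 ^ j) := by
  induction k, hk using Nat.le_induction with
  | base => simp [gam]
  | succ k hk ih =>
    have h1 : 1 ≤ 2 ^ k := Nat.one_le_two_pow
    have h3 : 2 ^ (k + 1) = 2 * 2 ^ k := by ring
    have h2 : 2 ^ (k + 1) - 1 = 2 * (2 ^ k - 1) + 1 := by omega
    rw [h2, gam_odd, show 2^k - 1 + 1 = 2^k by omega, gam_two_pow, ih, ← pow_mul,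
      CharTwo.sum_sq]
    have hsq : ∀ j ∈ Finset.Icc 1 k,
        ((Polynomial.X : Polynomial (ZMod 2)) ^ (2 ^ k - 2 ^ j)) ^ 2
          = Polynomial.X ^ (2 ^ (k + 1) - 2 ^ (j + 1)) := by
      intro j hj
      have hj' : j ≤ k := (Finset.mem_Icc.mp hj).2
      have hle : 2 ^ j ≤ 2 ^ k := Nat.pow_le_pow_right (by norm_num) hj'
      have hj3 : 2 ^ (j + 1) = 2 * 2 ^ j := by ring
      rw [← pow_mul]
      congr 1
      omega
    rw [Finset.sum_congr rfl hsq]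
    have hins : Finset.Icc 1 (k + 1) = insert 1 (Finset.Icc 2 (k + 1)) := by
      ext x
      simp only [Finset.mem_Icc, Finset.mem_insert]
      omega
    rw [hins, Finset.sum_insert (by simp)]
    have hmap : (∑ j ∈ Finset.Icc 2 (k+1),
          (Polynomial.X : Polynomial (ZMod 2)) ^ (2 ^ (k+1) - 2 ^ j))
        = ∑ j ∈ Finset.Icc 1 k, Polynomial.X ^ (2 ^ (k+1) - 2 ^ (j + 1)) := by
      rw [show Finset.Icc 2 (k+1) = (Finset.Icc 1 k).map (addRightEmbedding 1) by
            rw [Finset.map_add_right_Icc]]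
      rw [Finset.sum_map]
      simp [addRightEmbedding]
    rw [hmap, show (2 ^ k - 1) * 2 = 2 ^ (k + 1) - 2 ^ 1 by omega]
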